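/- Let n = sm+s-l with 1 ≤ u ≤ s-l, and let F ⊆ 2^[n] with ν(F) < s. With π_e the partition of sm into s equal parts m and X_i, y as defined, the shadow-type bound y(m+u) ≥ (1/s)·C(n, m+u)·Σ_{i=1}^{⌊(s-l)/u⌋} X_i(π_e) holds. -/

import Mathlib

open Finset Nat

/-- The family `F` contains `s` pairwise disjoint members. -/
def HasMatching {n : ℕ} (F : Finset (Finset (Fin n))) (s : ℕ) : Prop :=
  ∃ 𝒜 : Finset (Finset (Fin n)), 𝒜 ⊆ F ∧ 𝒜.card = s ∧
    (𝒜 : Set (Finset (Fin n))).Pairwise Disjoint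

/-- The `s`-tuples of pairwise disjoint subsets of `[n]` of type `π = (p 0, ..., p (s-1))`. -/
def tuples (n s : ℕ) (p : Fin s → ℕ) : Finset (Fin s → Finset (Fin n)) :=
  Finset.univ.filter fun f =>
    (∀ r, (f r).card = p r) ∧ ∀ i j, i ≠ j → Disjoint (f i) (f j)

/-- `C_i(π)`: tuples of type `π` with exactly `i` coordinates not in `F`. -/
def Ctuples (n s : ℕ) (F : Finset (Finset (Fin n))) (p : Fin s → ℕ) (i : ℕ) :
    Finset (Fin s → Finset (Fin n)) :=
  (tuples n s p).filter fun f => (Finset.univ.filter fun r => f r ∉ F).card = i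

/-- `y(q)`: the number of `q`-subsets of `[n]` not in `F`. -/
def ymiss (n : ℕ) (F : Finset (Finset (Fin n))) (q : ℕ) : ℕ :=
  (Finset.univ.filter fun A : Finset (Fin n) => A.card = q ∧ A ∉ F).card

/-- `X_i(π_e)` for the partition of `sm` into `s` equal parts `m`. -/
noncomputable def Xe (n s m : ℕ) (F : Finset (Finset (Fin n))) (i : ℕ) : ℚ :=
  ((Ctuples n s F (fun _ => m) i).card : ℚ) / ((tuples n s (fun _ => m)).card : ℚ)



variable {α : Type*} [DecidableEq α] [Fintype α]

def dtup (S : Finset α) (s : ℕ) (p : Fin s → ℕ) : Finset (Fin s → Finset α) :=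
  Finset.univ.filter fun f =>
    (∀ r, f r ⊆ S ∧ (f r).card = p r) ∧ ∀ i j, i ≠ j → Disjoint (f i) (f j)

lemma mem_dtup {S : Finset α} {s : ℕ} {p : Fin s → ℕ} {f : Fin s → Finset α} :
    f ∈ dtup S s p ↔ (∀ r, f r ⊆ S ∧ (f r).card = p r) ∧
      ∀ i j, i ≠ j → Disjoint (f i) (f j) := by
  simp [dtup]

lemma dtup_succ (S : Finset α) (s : ℕ) (p : Fin (s+1) → ℕ) :
    dtup S (s+1) p = (S.powersetCard (p 0)).biUnion
      (fun B => (dtup (S \ B) s (p ∘ Fin.succ)).image (Fin.cons B)) := by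
  ext f
  simp only [mem_dtup, Finset.mem_biUnion, Finset.mem_image, Finset.mem_powersetCard]
  constructor
  · rintro ⟨h1, h2⟩
    refine ⟨f 0, ⟨(h1 0).1, (h1 0).2⟩, Fin.tail f, ⟨⟨fun r => ?_, fun i j hij => ?_⟩, Fin.cons_self_tail f⟩⟩
    · refine ⟨Finset.subset_sdiff.2 ⟨(h1 r.succ).1, h2 r.succ 0 (Fin.succ_ne_zero r)⟩, (h1 r.succ).2⟩
    · exact h2 i.succ j.succ (fun h => hij (Fin.succ_injective _ h))
  · rintro ⟨B, ⟨hBS, hBc⟩, g, ⟨hg1, hg2⟩, rfl⟩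
    constructor
    · intro r
      refine Fin.cases ?_ (fun j => ?_) r
      · simpa using ⟨hBS, hBc⟩
      · simpa using ⟨((hg1 j).1.trans (Finset.sdiff_subset)), (hg1 j).2⟩
    · intro i j hij
      refine Fin.cases (fun j hij => ?_) (fun i j hij => ?_) i j hij
      · refine Fin.cases (fun h => absurd rfl h) (fun j _ => ?_) j hij
        simpa using (Finset.sdiff_disjoint.mono_left (hg1 j).1).symm
      · refine Fin.cases (fun h => ?_) (fun j' hij => ?_) j hij
        · simpa using (Finset.sdiff_disjoint.mono_left (hg1 i).1)
        · simpa using hg2 i j' (fun h => hij (by rw [h]))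

lemma dtup_card (s : ℕ) (S : Finset α) (p : Fin s → ℕ) (h : ∑ r, p r ≤ S.card) :
    (dtup S s p).card * (S.card - ∑ r, p r) ! * ∏ r, (p r) ! = (S.card) ! := by
  induction s generalizing S with
  | zero =>
    have h1 : dtup S 0 p = Finset.univ := by
      ext f
      simp only [mem_dtup, Finset.mem_univ, iff_true]
      exact ⟨fun r => r.elim0, fun i => i.elim0⟩
    rw [h1, Finset.card_univ]
    simp
  | succ s ih =>
    rw [dtup_succ]
    have hdisj : ∀ B1 ∈ S.powersetCard (p 0), ∀ B2 ∈ S.powersetCard (p 0), B1 ≠ B2 →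
        Disjoint ((dtup (S \ B1) s (p ∘ Fin.succ)).image (Fin.cons (α := fun _ : Fin (s+1) => Finset α) B1))
          ((dtup (S \ B2) s (p ∘ Fin.succ)).image (Fin.cons (α := fun _ : Fin (s+1) => Finset α) B2)) := by
      intro B1 _ B2 _ hne
      rw [Finset.disjoint_left]
      rintro f hf1 hf2
      simp only [Finset.mem_image] at hf1 hf2
      obtain ⟨g1, _, rfl⟩ := hf1
      obtain ⟨g2, _, h2⟩ := hf2
      exact hne (by simpa using congrFun h2.symm 0)
    rw [Finset.card_biUnion hdisj]
    have hcard : ∀ B ∈ S.powersetCard (p 0),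
        ((dtup (S \ B) s (p ∘ Fin.succ)).image (Fin.cons (α := fun _ : Fin (s+1) => Finset α) B)).card
          * ((S.card - ∑ r, p r) ! * ∏ r : Fin s, (p r.succ) !) = (S.card - p 0) ! := by
      intro B hB
      rw [Finset.mem_powersetCard] at hB
      have hc : (S \ B).card = S.card - p 0 := by rw [Finset.card_sdiff_of_subset hB.1, hB.2]
      have hsum : ∑ r : Fin s, (p ∘ Fin.succ) r ≤ (S \ B).card := by
        rw [hc]
        have h2 := h
        rw [Fin.sum_univ_succ] at h2
        have h3 : ∑ r : Fin s, (p ∘ Fin.succ) r = ∑ i : Fin s, p i.succ :=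
          Finset.sum_congr rfl (fun _ _ => rfl)
        omega
      have := ih (S \ B) (p ∘ Fin.succ) hsum
      rw [hc] at this
      rw [Finset.card_image_of_injective _ (Fin.cons_right_injective (α := fun _ : Fin (s+1) => Finset α) B)]
      have hsub : S.card - ∑ r : Fin (s+1), p r = S.card - p 0 - ∑ r : Fin s, (p ∘ Fin.succ) r := by
        have h3 : ∑ r : Fin s, (p ∘ Fin.succ) r = ∑ i : Fin s, p i.succ :=
          Finset.sum_congr rfl (fun _ _ => rfl)
        have h4 := Fin.sum_univ_succ p
        omega
      rw [hsub, ← mul_assoc]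
      exact this
    have hsumB : (∑ B ∈ S.powersetCard (p 0),
          ((dtup (S \ B) s (p ∘ Fin.succ)).image
            (Fin.cons (α := fun _ : Fin (s+1) => Finset α) B)).card) *
        ((S.card - ∑ r : Fin (s+1), p r)! * ∏ r : Fin s, (p r.succ)!)
        = S.card.choose (p 0) * (S.card - p 0)! := by
      rw [Finset.sum_mul, Finset.sum_congr rfl hcard, Finset.sum_const, smul_eq_mul,
        Finset.card_powersetCard]
    have hp0 : p 0 ≤ S.card := by
      have h2 := h
      rw [Fin.sum_univ_succ] at h2
      omega
    calc (∑ B ∈ S.powersetCard (p 0),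
          ((dtup (S \ B) s (p ∘ Fin.succ)).image
            (Fin.cons (α := fun _ : Fin (s+1) => Finset α) B)).card) *
          (S.card - ∑ r : Fin (s+1), p r)! * ∏ r : Fin (s+1), (p r)!
        = ((∑ B ∈ S.powersetCard (p 0),
          ((dtup (S \ B) s (p ∘ Fin.succ)).image
            (Fin.cons (α := fun _ : Fin (s+1) => Finset α) B)).card) *
          ((S.card - ∑ r : Fin (s+1), p r)! * ∏ r : Fin s, (p r.succ)!)) * (p 0)! := by
          rw [Fin.prod_univ_succ]; ring
      _ = S.card.choose (p 0) * (S.card - p 0)! * (p 0)! := by rw [hsumB]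
      _ = S.card.choose (p 0) * (p 0)! * (S.card - p 0)! := by ring
      _ = (S.card)! := Nat.choose_mul_factorial_mul_factorial hp0

lemma dtup_fixed_coord_card (S : Finset α) (k q : ℕ) (j0 : Fin (k+1)) (U : Finset α)
    (hU : U ⊆ S) (hUc : U.card = q) :
    ((dtup S (k+1) (fun _ => q)).filter (fun w => w j0 = U)).card
      = (dtup (S \ U) k (fun _ => q)).card := by
  apply Finset.card_bij (fun w _ => Fin.removeNth j0 w)
  · rintro w hw
    simp only [Finset.mem_filter, mem_dtup] at hw
    obtain ⟨⟨h1, h2⟩, h3⟩ := hw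
    rw [mem_dtup]
    refine ⟨fun r => ⟨?_, (h1 _).2⟩, fun i j hij => ?_⟩
    · refine Finset.subset_sdiff.2 ⟨(h1 _).1, ?_⟩
      rw [← h3]
      exact h2 _ _ (Fin.succAbove_ne j0 r)
    · exact h2 _ _ (fun h => hij (j0.succAbove_right_injective h))
  · rintro w1 hw1 w2 hw2 heq
    simp only [Finset.mem_filter] at hw1 hw2
    have := Fin.insertNth_self_removeNth j0 w1
    rw [hw1.2] at this
    rw [← this, heq, ← hw2.2, Fin.insertNth_self_removeNth]
  · rintro g hg
    rw [mem_dtup] at hg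
    refine ⟨Fin.insertNth j0 U g, Finset.mem_filter.2 ⟨mem_dtup.2 ⟨?_, ?_⟩, Fin.insertNth_apply_same (α := fun _ : Fin (k+1) => Finset α) j0 U g⟩, ?_⟩
    · intro r
      refine Fin.succAboveCases j0 ?_ (fun i => ?_) r
      · rw [Fin.insertNth_apply_same]; exact ⟨hU, hUc⟩
      · rw [Fin.insertNth_apply_succAbove]
        exact ⟨((hg.1 i).1).trans Finset.sdiff_subset, (hg.1 i).2⟩
    · intro a b hab
      refine Fin.succAboveCases j0 ?_ (fun i => ?_) a hab
      · refine Fin.succAboveCases j0 (fun h => absurd rfl h) (fun j _ => ?_) b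
        rw [Fin.insertNth_apply_same, Fin.insertNth_apply_succAbove]
        exact (Finset.disjoint_sdiff.mono_right (hg.1 j).1)
      · refine Fin.succAboveCases j0 (fun _ => ?_) (fun j hij => ?_) b
        · rw [Fin.insertNth_apply_same, Fin.insertNth_apply_succAbove]
          exact (Finset.sdiff_disjoint.mono_left (hg.1 i).1)
        · rw [Fin.insertNth_apply_succAbove, Fin.insertNth_apply_succAbove]
          exact hg.2 i j (fun h => hij (by rw [h]))
    · funext r
      rw [Fin.removeNth, Fin.insertNth_apply_succAbove]

lemma dtup_card_pos (S : Finset α) (s : ℕ) (p : Fin s → ℕ) (h : ∑ r, p r ≤ S.card) :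
    0 < (dtup S s p).card := by
  have hc := dtup_card s S p h
  have h0 : (S.card)! ≠ 0 := Nat.factorial_ne_zero _
  rcases Nat.eq_zero_or_pos (dtup S s p).card with h1 | h1
  · rw [h1] at hc; simp at hc; exact absurd hc.symm h0
  · exact h1

lemma dtup_card_congr (S S' : Finset α) (s : ℕ) (p : Fin s → ℕ) (h : ∑ r, p r ≤ S.card)
    (hc : S.card = S'.card) : (dtup S s p).card = (dtup S' s p).card := by
  have h1 := dtup_card s S p h
  have h2 := dtup_card s S' p (hc ▸ h)
  rw [← hc] at h2
  have hpos : 0 < (S.card - ∑ r, p r)! * ∏ r, (p r)! :=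
    Nat.mul_pos (Nat.factorial_pos _) (Finset.prod_pos fun r _ => Nat.factorial_pos _)
  have := h1.trans h2.symm
  rw [mul_assoc, mul_assoc] at this
  exact Nat.eq_of_mul_eq_mul_right hpos this

lemma tuples_eq_dtup (n s : ℕ) (p : Fin s → ℕ) :
    tuples n s p = dtup Finset.univ s p := by
  ext f
  simp [tuples, mem_dtup]

lemma badpairs_lower (n s m l u : ℕ) (hls : l ≤ s) (hu1 : 1 ≤ u) (hm : 1 ≤ m)
    (hn : n = s * m + s - l)
    (F : Finset (Finset (Fin n))) (hF : ¬ HasMatching F s)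
    (f : Fin s → Finset (Fin n)) (hf : f ∈ tuples n s (fun _ => m))
    (i : ℕ) (hR : (Finset.univ.filter fun r => f r ∉ F).card = i + 1)
    (hiu : (i + 1) * u ≤ s - l) :
    (s - l).choose u ≤ (((Finset.univ.filter fun r => f r ∉ F) ×ˢ
        (((Finset.univ.biUnion f)ᶜ).powersetCard u)).filter
        fun x => f x.1 ∪ x.2 ∉ F).card := by
  classical
  set R : Finset (Fin s) := Finset.univ.filter fun r => f r ∉ F with hRdef
  set D : Finset (Fin n) := (Finset.univ.biUnion f)ᶜ with hDdef
  simp only [tuples, Finset.mem_filter, Finset.mem_univ, true_and] at hf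
  obtain ⟨hfc, hfd⟩ := hf
  have hfD : ∀ r, f r ⊆ Finset.univ.biUnion f := fun r =>
    fun a ha => Finset.mem_biUnion.2 ⟨r, Finset.mem_univ r, ha⟩
  have hfw : ∀ (r : Fin s) (U : Finset (Fin n)), U ⊆ D → Disjoint (f r) U := by
    intro r U hU
    rw [Finset.disjoint_left]
    intro a ha haU
    have := hU haU
    rw [hDdef, Finset.mem_compl] at this
    exact this (hfD r ha)
  have hDcard : D.card = s - l := by
    have h1 : (Finset.univ.biUnion f).card = s * m := by
      rw [Finset.card_biUnion (fun x _ y _ hxy => hfd x y hxy)]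
      simp [hfc, Finset.sum_const, Finset.card_univ, mul_comm]
    rw [hDdef, Finset.card_compl, h1, Fintype.card_fin]
    omega
  set e := R.orderIsoOfFin hR with he
  -- existence of a bad coordinate for every system
  have hex : ∀ w, w ∈ dtup D (i+1) (fun _ => u) → ∃ j : Fin (i+1), f (e j : Fin s) ∪ w j ∉ F := by
    intro w hw
    by_contra hcon
    push_neg at hcon
    rw [mem_dtup] at hw
    exfalso
    apply hF
    set g : Fin s → Finset (Fin n) :=
      fun r => if hr : r ∈ R then f r ∪ w (e.symm ⟨r, hr⟩) else f r with hg
    have hfg : ∀ r, f r ⊆ g r := by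
      intro r
      by_cases hr : r ∈ R
      · simp only [hg, dif_pos hr]; exact Finset.subset_union_left
      · simp only [hg, dif_neg hr]; exact subset_rfl
    have hgF : ∀ r, g r ∈ F := by
      intro r
      by_cases hr : r ∈ R
      · simp only [hg, dif_pos hr]
        have := hcon (e.symm ⟨r, hr⟩)
        rwa [OrderIso.apply_symm_apply] at this
      · simp only [hg, dif_neg hr]
        rw [hRdef] at hr
        simp only [Finset.mem_filter, Finset.mem_univ, true_and, not_not] at hr
        exact hr
    have hgdisj : ∀ r r', r ≠ r' → Disjoint (g r) (g r') := by
      intro r r' hrr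
      have hww : ∀ (hr : r ∈ R) (hr' : r' ∈ R),
          Disjoint (w (e.symm ⟨r, hr⟩)) (w (e.symm ⟨r', hr'⟩)) := by
        intro hr hr'
        refine hw.2 _ _ (fun h => hrr ?_)
        have := e.symm.injective h
        exact congrArg Subtype.val this
      have hwD : ∀ j, (w j : Finset (Fin n)) ⊆ D := fun j => (hw.1 j).1
      by_cases hr : r ∈ R <;> by_cases hr' : r' ∈ R <;>
        simp only [hg, dif_pos, dif_neg, hr, hr'] <;>
        [skip; skip; skip; exact hfd r r' hrr]
      · rw [Finset.disjoint_union_left, Finset.disjoint_union_right, Finset.disjoint_union_right]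
        exact ⟨⟨hfd r r' hrr, hfw r _ (hwD _)⟩, ⟨(hfw r' _ (hwD _)).symm, hww hr hr'⟩⟩
      · rw [Finset.disjoint_union_left]
        exact ⟨hfd r r' hrr, (hfw r' _ (hwD _)).symm⟩
      · rw [Finset.disjoint_union_right]
        exact ⟨hfd r r' hrr, hfw r _ (hwD _)⟩
    have hginj : Function.Injective g := by
      intro a b hab
      by_contra hne
      have hd := hgdisj a b hne
      rw [hab, disjoint_self] at hd
      have hdd : g b = ∅ := hd
      have : f b ⊆ (∅ : Finset (Fin n)) := hdd ▸ hfg b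
      have := Finset.card_le_card this
      rw [hfc b, Finset.card_empty] at this
      omega
    refine ⟨Finset.univ.image g, ?_, ?_, ?_⟩
    · intro A hA
      obtain ⟨r, _, rfl⟩ := Finset.mem_image.1 hA
      exact hgF r
    · rw [Finset.card_image_of_injective _ hginj, Finset.card_univ, Fintype.card_fin]
    · intro A hA B hB hAB
      obtain ⟨a, _, rfl⟩ := Finset.mem_image.1 (by exact_mod_cast hA)
      obtain ⟨b, _, rfl⟩ := Finset.mem_image.1 (by exact_mod_cast hB)
      exact hgdisj a b (fun h => hAB (by rw [h]))
  -- the map Φ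
  set Φ : (Fin (i+1) → Finset (Fin n)) → Fin s × Finset (Fin n) :=
    fun w => if h : ∃ j : Fin (i+1), f (e j : Fin s) ∪ w j ∉ F
      then ((e h.choose : Fin s), w h.choose) else ((e ⟨0, Nat.succ_pos i⟩ : Fin s), ∅) with hΦ
  set badpairs := ((R ×ˢ (D.powersetCard u)).filter fun x => f x.1 ∪ x.2 ∉ F) with hbp
  have hΦmem : ∀ w ∈ dtup D (i+1) (fun _ => u), Φ w ∈ badpairs := by
    intro w hw
    have h := hex w hw
    simp only [hΦ, dif_pos h]
    rw [mem_dtup] at hw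
    refine Finset.mem_filter.2 ⟨Finset.mem_product.2 ⟨(e h.choose).2, ?_⟩, h.choose_spec⟩
    exact Finset.mem_powersetCard.2 ⟨(hw.1 h.choose).1, (hw.1 h.choose).2⟩
  have hsum := Finset.card_eq_sum_card_fiberwise hΦmem
  have hfiber : ∀ b ∈ badpairs, ((dtup D (i+1) (fun _ => u)).filter fun w => Φ w = b).card
      ≤ (dtup (D \ b.2) i (fun _ => u)).card := by
    intro b hb
    rw [hbp, Finset.mem_filter, Finset.mem_product] at hb
    obtain ⟨⟨hb1, hb2⟩, _⟩ := hb
    rw [Finset.mem_powersetCard] at hb2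
    rw [← dtup_fixed_coord_card D i u (e.symm ⟨b.1, hb1⟩) b.2 hb2.1 hb2.2]
    apply Finset.card_le_card
    intro w hw
    rw [Finset.mem_filter] at hw ⊢
    refine ⟨hw.1, ?_⟩
    have h := hex w hw.1
    have := hw.2
    simp only [hΦ, dif_pos h] at this
    have h1 : (e h.choose : Fin s) = b.1 := (Prod.ext_iff.1 this).1
    have h2 : w h.choose = b.2 := (Prod.ext_iff.1 this).2
    have : e h.choose = ⟨b.1, hb1⟩ := Subtype.ext h1
    have : h.choose = e.symm ⟨b.1, hb1⟩ := by rw [← this, OrderIso.symm_apply_apply]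
    rw [← this, h2]
  -- counting
  have hTcard : (dtup D (i+1) (fun _ => u)).card * ((s - l - u - i * u)! * (u !)^(i+1))
      = (s - l)! := by
    have h1 := dtup_card (i+1) D (fun _ => u)
      (by simp only [Finset.sum_const, Finset.card_univ, Fintype.card_fin, smul_eq_mul, hDcard]
          exact hiu)
    simp only [Finset.sum_const, Finset.card_univ, Fintype.card_fin, smul_eq_mul,
      Finset.prod_const, hDcard] at h1
    rw [← h1]
    have : s - l - (i+1) * u = s - l - u - i * u := by
      rw [Nat.succ_mul]; omega
    rw [this, mul_assoc]
  have hT1card : ∀ b ∈ badpairs, (dtup (D \ b.2) i (fun _ => u)).card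
      * ((s - l - u - i * u)! * (u !)^i) = (s - l - u)! := by
    intro b hb
    rw [hbp, Finset.mem_filter, Finset.mem_product] at hb
    rw [Finset.mem_powersetCard] at hb
    have hc : (D \ b.2).card = s - l - u := by
      rw [Finset.card_sdiff_of_subset hb.1.2.1, hDcard, hb.1.2.2]
    have hiu2 : i * u ≤ s - l - u := by
      have h2 : i * u + u ≤ s - l := by rw [← Nat.succ_mul]; exact hiu
      omega
    have h1 := dtup_card i (D \ b.2) (fun _ => u)
      (by simp only [Finset.sum_const, Finset.card_univ, Fintype.card_fin, smul_eq_mul, hc]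
          exact hiu2)
    simp only [Finset.sum_const, Finset.card_univ, Fintype.card_fin, smul_eq_mul,
      Finset.prod_const, hc] at h1
    rw [← h1]
    have : s - l - u - i * u = s - l - u - i * u := rfl
    rw [mul_assoc]
  have hu_sl : u ≤ s - l := by
    have h2 : 1 * u ≤ (i+1) * u := Nat.mul_le_mul_right u (by omega)
    rw [one_mul] at h2
    exact le_trans h2 hiu
  have hkey : (s - l)! ≤ badpairs.card * ((s - l - u)! * u !) := by
    calc (s - l)! = (dtup D (i+1) (fun _ => u)).card * ((s - l - u - i * u)! * (u !)^(i+1)) :=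
          hTcard.symm
      _ ≤ (∑ b ∈ badpairs, ((dtup D (i+1) (fun _ => u)).filter fun w => Φ w = b).card)
            * ((s - l - u - i * u)! * (u !)^(i+1)) := by rw [← hsum]
      _ ≤ (∑ b ∈ badpairs, (dtup (D \ b.2) i (fun _ => u)).card)
            * ((s - l - u - i * u)! * (u !)^(i+1)) := by
          exact Nat.mul_le_mul_right _ (Finset.sum_le_sum hfiber)
      _ = ∑ b ∈ badpairs, (dtup (D \ b.2) i (fun _ => u)).card
            * (((s - l - u - i * u)! * (u !)^i) * (u !)) := by
          rw [Finset.sum_mul]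
          exact Finset.sum_congr rfl (fun b _ => by rw [pow_succ]; ring)
      _ = ∑ b ∈ badpairs, (s - l - u)! * (u !) := by
          exact Finset.sum_congr rfl (fun b hb => by rw [← mul_assoc, hT1card b hb])
      _ = badpairs.card * ((s - l - u)! * (u !)) := by
          rw [Finset.sum_const, smul_eq_mul]
  have hchoose : (s - l).choose u * (u ! * (s - l - u)!) = (s - l)! := by
    have := Nat.choose_mul_factorial_mul_factorial hu_sl
    rw [← this]; ring
  have hfin : (s - l).choose u * ((s - l - u)! * u !) ≤ badpairs.card * ((s - l - u)! * u !) := by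
    calc (s - l).choose u * ((s - l - u)! * u !) = (s - l)! := by rw [← hchoose]; ring
      _ ≤ badpairs.card * ((s - l - u)! * u !) := hkey
  exact Nat.le_of_mul_le_mul_right hfin (Nat.mul_pos (Nat.factorial_pos _) (Nat.factorial_pos _))

lemma mem_tuples' {n s m : ℕ} {f : Fin s → Finset (Fin n)} :
    f ∈ tuples n s (fun _ => m) ↔ (∀ r, (f r).card = m) ∧
      ∀ i j, i ≠ j → Disjoint (f i) (f j) := by
  simp [tuples]

lemma tuple_inj {n s m : ℕ} (hm : 1 ≤ m) {f : Fin s → Finset (Fin n)}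
    (hf : f ∈ tuples n s (fun _ => m)) : Function.Injective f := by
  rw [mem_tuples'] at hf
  intro a b hab
  by_contra hne
  have hd := hf.2 a b hne
  rw [hab, disjoint_self] at hd
  have : (f b).card = 0 := by rw [show f b = ∅ from hd]; simp
  rw [hf.1 b] at this
  omega

lemma tuple_union_inter {n s m : ℕ} {f : Fin s → Finset (Fin n)}
    (hf : f ∈ tuples n s (fun _ => m)) (r : Fin s) (U : Finset (Fin n))
    (hU : U ⊆ (Finset.univ.biUnion f)ᶜ) :
    (f r ∪ U) ∩ Finset.univ.biUnion f = f r ∧ (f r ∪ U) \ Finset.univ.biUnion f = U := by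
  have hsub : f r ⊆ Finset.univ.biUnion f :=
    fun a ha => Finset.mem_biUnion.2 ⟨r, Finset.mem_univ r, ha⟩
  have hdisj : Disjoint U (Finset.univ.biUnion f) := by
    rw [Finset.disjoint_left]
    intro a ha h2
    exact (Finset.mem_compl.1 (hU ha)) h2
  constructor
  · rw [Finset.union_inter_distrib_right, Finset.inter_eq_left.2 hsub,
      Finset.disjoint_iff_inter_eq_empty.1 hdisj, Finset.union_empty]
  · rw [Finset.union_sdiff_distrib, Finset.sdiff_eq_empty_iff_subset.2 hsub,
      Finset.sdiff_eq_self_iff_disjoint.2 hdisj, Finset.empty_union]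

theorem stmt16 (n s m l u : ℕ) (hl1 : 1 ≤ l) (hls : l ≤ s) (hu1 : 1 ≤ u)
    (hu2 : u ≤ s - l) (hn : n = s * m + s - l)
    (F : Finset (Finset (Fin n))) (hF : ¬ HasMatching F s) :
    (ymiss n F (m + u) : ℚ)
      ≥ 1 / (s : ℚ) * (n.choose (m + u) : ℚ)
        * ∑ i ∈ Finset.Icc 1 ((s - l) / u), Xe n s m F i := by
  classical
  by_cases hm : 1 ≤ m
  swap
  · -- m = 0 case
    have hm0 : m = 0 := by omega
    subst hm0
    have hzero : ∀ i ∈ Finset.Icc 1 ((s - l) / u), Xe n s 0 F i = 0 := by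
      intro i hi
      rw [Finset.mem_Icc] at hi
      have hempty : Ctuples n s F (fun _ => 0) i = ∅ := by
        rw [Finset.eq_empty_iff_forall_notMem]
        intro f hf
        rw [Ctuples, Finset.mem_filter] at hf
        obtain ⟨hf1, hf2⟩ := hf
        rw [mem_tuples'] at hf1
        have hfe : ∀ r, f r = ∅ := fun r => Finset.card_eq_zero.1 (hf1.1 r)
        by_cases hemp : (∅ : Finset (Fin n)) ∈ F
        · have h2 : (Finset.univ.filter fun r => f r ∉ F) = ∅ := by
            rw [Finset.filter_eq_empty_iff]
            intro r _
            rw [hfe r, not_not]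
            exact hemp
          rw [h2, Finset.card_empty] at hf2
          omega
        · have h2 : (Finset.univ.filter fun r : Fin s => f r ∉ F) = Finset.univ := by
            rw [Finset.filter_eq_self]
            intro r _
            rw [hfe r]
            exact hemp
          rw [h2, Finset.card_univ, Fintype.card_fin] at hf2
          have hK : (s - l) / u ≤ s - l := Nat.div_le_self _ _
          omega
      rw [Xe, hempty]
      simp
    rw [ge_iff_le, Finset.sum_eq_zero hzero, mul_zero]
    positivity
  -- main case : 1 ≤ m
  obtain ⟨t, rfl⟩ : ∃ t, s = t + 1 := ⟨s - 1, by omega⟩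
  set s := t + 1 with hs
  set K := (s - l) / u with hK
  set N := (tuples n s (fun _ => m)).card with hN
  have htup : tuples n s (fun _ => m) = dtup Finset.univ s (fun _ => m) :=
    tuples_eq_dtup n s _
  have hsm : s * m + (s - l) = n := by omega
  have hmun : m + u ≤ n := by
    have : s * m = m + t * m := by ring
    omega
  have hnsm : n - s * m = s - l := by omega
  have htm : t * m + m + (s - l) = n := by
    have h2 : s * m = t * m + m := by rw [hs]; ring
    omega
  -- the set of missing (m+u)-sets
  set missing := Finset.univ.filter
    (fun A : Finset (Fin n) => A.card = m + u ∧ A ∉ F) with hmissing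
  have hymiss : missing.card = ymiss n F (m + u) := rfl
  -- ambient complement-size set for N'
  obtain ⟨S0, hS0sub, hS0card⟩ := Finset.exists_subset_card_eq
    (show n - (m + u) ≤ (Finset.univ : Finset (Fin n)).card by
      rw [Finset.card_univ, Fintype.card_fin]; omega)
  set N' := (dtup S0 t (fun _ => m)).card with hN'
  -- the pairs
  set Pairs := ((tuples n s (fun _ => m)) ×ˢ (Finset.univ : Finset (Finset (Fin n)))).filter
    (fun x => x.2.card = m + u ∧ x.2 ∉ F ∧
      ∃ r, x.1 r ⊆ x.2 ∧ ∀ j, j ≠ r → Disjoint (x.1 j) x.2) with hPairs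
  -- Part I : lower bound
  have hlow : (s - l).choose u * ∑ i ∈ Finset.Icc 1 K, (Ctuples n s F (fun _ => m) i).card
      ≤ Pairs.card := by
    have hPfst : ∀ x ∈ Pairs, x.1 ∈ tuples n s (fun _ => m) := by
      intro x hx
      rw [hPairs, Finset.mem_filter, Finset.mem_product] at hx
      exact hx.1.1
    have hPsum := Finset.card_eq_sum_card_fiberwise hPfst
    set B := (Finset.Icc 1 K).biUnion (fun i => Ctuples n s F (fun _ => m) i) with hB
    have hBsub : B ⊆ tuples n s (fun _ => m) := by
      intro f hf
      rw [hB, Finset.mem_biUnion] at hf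
      obtain ⟨i, _, hfi⟩ := hf
      exact Finset.mem_of_mem_filter f hfi
    have hCdisj : Set.PairwiseDisjoint ↑(Finset.Icc 1 K)
        (fun i => Ctuples n s F (fun _ => m) i) := by
      intro i1 _ i2 _ hne
      simp only [Function.onFun]
      rw [Finset.disjoint_left]
      intro f hf1 hf2
      rw [Ctuples, Finset.mem_filter] at hf1 hf2
      exact hne (hf1.2 ▸ hf2.2)
    have hfib : ∀ f ∈ B, (s - l).choose u ≤ (Pairs.filter (fun x => x.1 = f)).card := by
      intro f hfB
      rw [hB, Finset.mem_biUnion] at hfB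
      obtain ⟨i, hi, hfi⟩ := hfB
      rw [Finset.mem_Icc] at hi
      rw [Ctuples, Finset.mem_filter] at hfi
      obtain ⟨hftup, hcount⟩ := hfi
      have hmt : f ∈ tuples n s (fun _ => m) := hftup
      have hiu : (i - 1 + 1) * u ≤ s - l := by
        have h1 : i - 1 + 1 = i := by omega
        rw [h1]
        exact (Nat.le_div_iff_mul_le (by omega)).1 hi.2
      have hbl := badpairs_lower n s m l u hls hu1 hm hn F hF f hmt (i - 1)
        (by rw [hcount]; omega) hiu
      refine le_trans hbl (Finset.card_le_card_of_injOn
        (fun b => (f, f b.1 ∪ b.2)) ?_ ?_)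
      · rintro ⟨r, U⟩ hb
        rw [Finset.mem_coe, Finset.mem_filter, Finset.mem_product] at hb
        obtain ⟨⟨hr, hU⟩, hnotF⟩ := hb
        rw [Finset.mem_powersetCard] at hU
        have hdisjrU : Disjoint (f r) U := by
          rw [Finset.disjoint_left]
          intro a ha haU
          exact (Finset.mem_compl.1 (hU.1 haU))
            (Finset.mem_biUnion.2 ⟨r, Finset.mem_univ r, ha⟩)
        rw [Finset.mem_coe, Finset.mem_filter, hPairs, Finset.mem_filter, Finset.mem_product]
        rw [mem_tuples'] at hmt
        refine ⟨⟨⟨hftup, Finset.mem_univ _⟩, ?_, hnotF, r, Finset.subset_union_left,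
          fun j hj => ?_⟩, rfl⟩
        · rw [Finset.card_union_of_disjoint hdisjrU, hmt.1 r, hU.2]
        · rw [Finset.disjoint_union_right]
          refine ⟨hmt.2 j r hj, ?_⟩
          rw [Finset.disjoint_left]
          intro a ha haU
          exact (Finset.mem_compl.1 (hU.1 haU))
            (Finset.mem_biUnion.2 ⟨j, Finset.mem_univ j, ha⟩)
      · rintro ⟨r, U⟩ hb ⟨r', U'⟩ hb' heq
        rw [Finset.coe_filter, Set.mem_setOf_eq] at hb hb'
        rw [Finset.mem_product, Finset.mem_powersetCard] at hb hb'
        have hU : U ⊆ (Finset.univ.biUnion f)ᶜ := hb.1.2.1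
        have hU' : U' ⊆ (Finset.univ.biUnion f)ᶜ := hb'.1.2.1
        have heq2 : f r ∪ U = f r' ∪ U' := congrArg Prod.snd heq
        have h1 := tuple_union_inter hmt r U hU
        have h2 := tuple_union_inter hmt r' U' hU'
        have hfr : f r = f r' := by rw [← h1.1, ← h2.1, heq2]
        have hUU : U = U' := by rw [← h1.2, ← h2.2, heq2]
        exact Prod.ext (tuple_inj hm hmt hfr) hUU
    calc (s - l).choose u * ∑ i ∈ Finset.Icc 1 K, (Ctuples n s F (fun _ => m) i).card
        = ∑ i ∈ Finset.Icc 1 K, ∑ _f ∈ Ctuples n s F (fun _ => m) i, (s - l).choose u := by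
          rw [Finset.mul_sum]
          exact Finset.sum_congr rfl fun i _ => by rw [Finset.sum_const, smul_eq_mul, mul_comm]
      _ = ∑ f ∈ B, (s - l).choose u := (Finset.sum_biUnion hCdisj).symm
      _ ≤ ∑ f ∈ B, (Pairs.filter (fun x => x.1 = f)).card := Finset.sum_le_sum hfib
      _ ≤ ∑ f ∈ tuples n s (fun _ => m), (Pairs.filter (fun x => x.1 = f)).card :=
          Finset.sum_le_sum_of_subset hBsub
      _ = Pairs.card := hPsum.symm
  -- Part II : upper bound
  have hup : Pairs.card ≤ missing.card * (s * ((m + u).choose m * N')) := by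
    have hPsnd : ∀ x ∈ Pairs, x.2 ∈ missing := by
      intro x hx
      rw [hPairs, Finset.mem_filter] at hx
      rw [hmissing, Finset.mem_filter]
      exact ⟨Finset.mem_univ _, hx.2.1, hx.2.2.1⟩
    rw [Finset.card_eq_sum_card_fiberwise hPsnd]
    have hfib2 : ∀ A ∈ missing, (Pairs.filter (fun x => x.2 = A)).card
        ≤ s * ((m + u).choose m * N') := by
      intro A hA
      rw [hmissing, Finset.mem_filter] at hA
      obtain ⟨-, hAc, hAF⟩ := hA
      have hN'A : (dtup (Finset.univ \ A) t (fun _ => m)).card = N' := by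
        have hc1 : (Finset.univ \ A).card = n - (m + u) := by
          rw [Finset.card_sdiff_of_subset (Finset.subset_univ A), Finset.card_univ,
            Fintype.card_fin, hAc]
        have hsum : ∑ _r : Fin t, m ≤ (Finset.univ \ A).card := by
          simp only [Finset.sum_const, Finset.card_univ, Fintype.card_fin, smul_eq_mul, hc1]
          omega
        rw [hN']
        exact dtup_card_congr _ _ _ _ hsum (by rw [hc1, hS0card])
      set ψ : (Fin s → Finset (Fin n)) × Finset (Fin n)
          → Fin s × Finset (Fin n) × (Fin t → Finset (Fin n)) :=
        fun x => if h : ∃ r, x.1 r ⊆ x.2 ∧ ∀ j, j ≠ r → Disjoint (x.1 j) x.2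
          then (h.choose, x.1 h.choose, Fin.removeNth h.choose x.1)
          else ((⟨0, Nat.succ_pos t⟩ : Fin (t+1)), ∅, fun _ => ∅) with hψ
      have hmaps : ∀ x ∈ Pairs.filter (fun x => x.2 = A), ψ x ∈
          (Finset.univ : Finset (Fin s)) ×ˢ
            (A.powersetCard m ×ˢ dtup (Finset.univ \ A) t (fun _ => m)) := by
        intro x hx
        rw [Finset.mem_filter] at hx
        obtain ⟨hxP, hxA⟩ := hx
        rw [hPairs, Finset.mem_filter, Finset.mem_product] at hxP
        obtain ⟨⟨hxt, -⟩, -, -, hex⟩ := hxP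
        rw [mem_tuples'] at hxt
        simp only [hψ, dif_pos hex]
        set r := hex.choose with hr
        have hspec := hex.choose_spec
        rw [Finset.mem_product, Finset.mem_product]
        refine ⟨Finset.mem_univ _, ?_, ?_⟩
        · rw [Finset.mem_powersetCard, ← hxA]
          exact ⟨hspec.1, hxt.1 r⟩
        · rw [mem_dtup]
          refine ⟨fun j => ⟨?_, hxt.1 _⟩, fun a b hab => ?_⟩
          · rw [Finset.subset_sdiff]
            refine ⟨Finset.subset_univ _, ?_⟩
            rw [← hxA]
            exact hspec.2 _ (Fin.succAbove_ne r j)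
          · exact hxt.2 _ _ (fun h => hab (r.succAbove_right_injective h))
      have hinj : Set.InjOn ψ ↑(Pairs.filter (fun x => x.2 = A)) := by
        intro x hx x' hx' heq
        rw [Finset.coe_filter, Set.mem_setOf_eq] at hx hx'
        have hex : ∃ r, x.1 r ⊆ x.2 ∧ ∀ j, j ≠ r → Disjoint (x.1 j) x.2 := by
          have := hx.1
          rw [hPairs, Finset.mem_filter] at this
          exact this.2.2.2
        have hex' : ∃ r, x'.1 r ⊆ x'.2 ∧ ∀ j, j ≠ r → Disjoint (x'.1 j) x'.2 := by
          have := hx'.1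
          rw [hPairs, Finset.mem_filter] at this
          exact this.2.2.2
        simp only [hψ, dif_pos hex, dif_pos hex'] at heq
        have h2' : x.1 hex.choose = x'.1 hex'.choose := by
          have := congrArg Prod.fst (congrArg Prod.snd heq)
          exact this
        have h3' : Fin.removeNth hex.choose x.1 = Fin.removeNth hex'.choose x'.1 := by
          have := congrArg Prod.snd (congrArg Prod.snd heq)
          exact this
        have h1' : hex.choose = hex'.choose := congrArg Prod.fst heq
        have hfun : x.1 = x'.1 := by
          have e1 := Fin.insertNth_self_removeNth hex.choose x.1
          have e2 := Fin.insertNth_self_removeNth hex'.choose x'.1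
          rw [← e1, h2', h3', h1']
          exact e2
        exact Prod.ext hfun (hx.2.trans hx'.2.symm)
      refine le_trans (Finset.card_le_card_of_injOn ψ hmaps hinj) ?_
      rw [Finset.card_product, Finset.card_product, Finset.card_powersetCard, hAc,
        Finset.card_univ, Fintype.card_fin, hN'A]
    calc ∑ A ∈ missing, (Pairs.filter (fun x => x.2 = A)).card
        ≤ ∑ _A ∈ missing, s * ((m + u).choose m * N') := Finset.sum_le_sum hfib2
      _ = missing.card * (s * ((m + u).choose m * N')) := by
          rw [Finset.sum_const, smul_eq_mul]
  -- Part III : the counting identity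
  have hid : (s - l).choose u * N = n.choose (m + u) * ((m + u).choose m * N') := by
    have e1 : N * ((s - l)! * (m !) ^ (t + 1)) = n ! := by
      have h := dtup_card s (Finset.univ : Finset (Fin n)) (fun _ => m)
        (by simp only [Finset.sum_const, Finset.card_univ, Fintype.card_fin, smul_eq_mul]
            omega)
      simp only [Finset.sum_const, Finset.card_univ, Fintype.card_fin, smul_eq_mul,
        Finset.prod_const] at h
      rw [hnsm] at h
      rw [hN, htup, ← mul_assoc]
      exact h
    have e2 : N' * ((s - l - u)! * (m !) ^ t) = (n - (m + u))! := by
      have h := dtup_card t S0 (fun _ => m)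
        (by simp only [Finset.sum_const, Finset.card_univ, Fintype.card_fin, smul_eq_mul,
              hS0card]
            omega)
      simp only [Finset.sum_const, Finset.card_univ, Fintype.card_fin, smul_eq_mul,
        Finset.prod_const, hS0card] at h
      have harg : n - (m + u) - t * m = s - l - u := by omega
      rw [harg] at h
      rw [hN', ← mul_assoc]
      exact h
    have e3 : (s - l).choose u * u ! * (s - l - u)! = (s - l)! :=
      Nat.choose_mul_factorial_mul_factorial hu2
    have e4 : n.choose (m + u) * (m + u)! * (n - (m + u))! = n ! :=
      Nat.choose_mul_factorial_mul_factorial hmun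
    have e5 : (m + u).choose m * m ! * u ! = (m + u)! := by
      have h := Nat.choose_mul_factorial_mul_factorial (show m ≤ m + u by omega)
      rwa [show m + u - m = u by omega] at h
    have hZpos : 0 < u ! * ((s - l - u)! * (m !) ^ (t + 1)) :=
      Nat.mul_pos (Nat.factorial_pos _)
        (Nat.mul_pos (Nat.factorial_pos _) (Nat.pow_pos (Nat.factorial_pos _)))
    apply Nat.eq_of_mul_eq_mul_right hZpos
    calc ((s - l).choose u * N) * (u ! * ((s - l - u)! * (m !) ^ (t + 1)))
        = N * (((s - l).choose u * u ! * (s - l - u)!) * (m !) ^ (t + 1)) := by ring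
      _ = N * ((s - l)! * (m !) ^ (t + 1)) := by rw [e3]
      _ = n ! := e1
      _ = n.choose (m + u) * (m + u)! * (n - (m + u))! := e4.symm
      _ = n.choose (m + u) * (((m + u).choose m * m ! * u !)
            * (N' * ((s - l - u)! * (m !) ^ t))) := by rw [e5, e2]; ring
      _ = (n.choose (m + u) * ((m + u).choose m * N'))
            * (u ! * ((s - l - u)! * (m !) ^ (t + 1))) := by rw [pow_succ]; ring
  -- Part IV : the natural-number inequality
  have hstar : n.choose (m + u) * ∑ i ∈ Finset.Icc 1 K, (Ctuples n s F (fun _ => m) i).card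
      ≤ s * N * ymiss n F (m + u) := by
    have hN'pos : 0 < (m + u).choose m * N' := by
      refine Nat.mul_pos (Nat.choose_pos (by omega)) ?_
      apply dtup_card_pos
      rw [hS0card]
      simp only [Finset.sum_const, Finset.card_univ, Fintype.card_fin, smul_eq_mul]
      have : s * m = m + t * m := by ring
      omega
    have h1 : N * ((s - l).choose u * ∑ i ∈ Finset.Icc 1 K, (Ctuples n s F (fun _ => m) i).card)
        ≤ N * (missing.card * (s * ((m + u).choose m * N'))) :=
      Nat.mul_le_mul_left N (le_trans hlow hup)
    have h2 : (n.choose (m + u) * ∑ i ∈ Finset.Icc 1 K, (Ctuples n s F (fun _ => m) i).card)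
        * ((m + u).choose m * N')
        ≤ (s * N * ymiss n F (m + u)) * ((m + u).choose m * N') := by
      calc (n.choose (m + u) * ∑ i ∈ Finset.Icc 1 K, (Ctuples n s F (fun _ => m) i).card)
            * ((m + u).choose m * N')
          = (n.choose (m + u) * ((m + u).choose m * N'))
              * ∑ i ∈ Finset.Icc 1 K, (Ctuples n s F (fun _ => m) i).card := by ring
        _ = ((s - l).choose u * N)
              * ∑ i ∈ Finset.Icc 1 K, (Ctuples n s F (fun _ => m) i).card := by rw [hid]
        _ = N * ((s - l).choose u
              * ∑ i ∈ Finset.Icc 1 K, (Ctuples n s F (fun _ => m) i).card) := by ring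
        _ ≤ N * (missing.card * (s * ((m + u).choose m * N'))) := h1
        _ = (s * N * missing.card) * ((m + u).choose m * N') := by ring
        _ = (s * N * ymiss n F (m + u)) * ((m + u).choose m * N') := by rw [hymiss]
    exact Nat.le_of_mul_le_mul_right h2 hN'pos
  -- Part V : cast to ℚ
  have hNpos : 0 < N := by
    rw [hN, htup]
    apply dtup_card_pos
    simp only [Finset.sum_const, Finset.card_univ, Fintype.card_fin, smul_eq_mul]
    omega
  have hXe : ∑ i ∈ Finset.Icc 1 K, Xe n s m F i
      = ((∑ i ∈ Finset.Icc 1 K, (Ctuples n s F (fun _ => m) i).card : ℕ) : ℚ) / (N : ℚ) := by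
    rw [Nat.cast_sum, Finset.sum_div]
    rfl
  rw [ge_iff_le, hXe]
  have hspos : (0 : ℚ) < (s : ℚ) * (N : ℚ) := by
    have : (0:ℚ) < (N:ℚ) := by exact_mod_cast hNpos
    have h2 : (0:ℚ) < (s:ℚ) := by
      have : 0 < s := Nat.succ_pos t
      exact_mod_cast this
    exact mul_pos h2 this
  have heq : 1 / (s : ℚ) * (n.choose (m + u) : ℚ)
      * (((∑ i ∈ Finset.Icc 1 K, (Ctuples n s F (fun _ => m) i).card : ℕ) : ℚ) / (N : ℚ))
      = ((n.choose (m + u) : ℚ) * ((∑ i ∈ Finset.Icc 1 K,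
          (Ctuples n s F (fun _ => m) i).card : ℕ) : ℚ)) / ((s : ℚ) * (N : ℚ)) := by
    ring
  rw [heq, div_le_iff₀ hspos]
  have hcast : ((n.choose (m + u) : ℚ) * ((∑ i ∈ Finset.Icc 1 K,
      (Ctuples n s F (fun _ => m) i).card : ℕ) : ℚ))
      ≤ ((s : ℚ) * (N : ℚ) * (ymiss n F (m + u) : ℚ)) := by
    exact_mod_cast hstar
  calc (n.choose (m + u) : ℚ) * ((∑ i ∈ Finset.Icc 1 K,
        (Ctuples n s F (fun _ => m) i).card : ℕ) : ℚ)
      ≤ (s : ℚ) * (N : ℚ) * (ymiss n F (m + u) : ℚ) := hcast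
    _ = (ymiss n F (m + u) : ℚ) * ((s : ℚ) * (N : ℚ)) := by ring
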